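/- Let I ⊆ S = k[x_0,...,x_n] be a homogeneous ideal that agrees with its saturation I^sat in all degrees ≥ r, and let x be a linear form that is a nonzerodivisor modulo I^sat. Then the colon ideal (I : x) agrees with I in all degrees ≥ r. -/

import Mathlib

open MvPolynomial
attribute [local instance] MvPolynomial.gradedAlgebra

/-- The polynomial ring `S = k[x_0, …, x_n]`. -/
noncomputable abbrev MvP (k : Type*) [Field k] (n : ℕ) : Type _ := MvPolynomial (Fin (n+1)) k

/-- The irrelevant maximal ideal `m = (x_0, …, x_n)`. -/
noncomputable def irrIdeal (k : Type*) [Field k] (n : ℕ) : Ideal (MvP k n) :=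
  Ideal.span (Set.range X)

/-- The saturation `I^sat = {s : s·m^t ⊆ I for some t}` of `I`. -/
noncomputable def satIdeal {k : Type*} [Field k] {n : ℕ} (I : Ideal (MvP k n)) :
    Ideal (MvP k n) :=
  ⨆ t : ℕ, I.colon ((irrIdeal k n ^ t : Ideal (MvP k n)) : Set (MvP k n))

/-- `I` agrees with its saturation in all degrees `≥ r`. -/
def SatInDegrees {k : Type*} [Field k] {n : ℕ} (I : Ideal (MvP k n)) (r : ℤ) : Prop :=
  ∀ d : ℕ, r ≤ (d : ℤ) → ∀ f ∈ homogeneousSubmodule (Fin (n+1)) k d, (f ∈ I ↔ f ∈ satIdeal I)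

/-- The saturation degree of `I`: the least `r` from which `I` agrees with `I^sat`. -/
noncomputable def satDeg {k : Type*} [Field k] {n : ℕ} (I : Ideal (MvP k n)) : ℤ :=
  sInf {r : ℤ | SatInDegrees I r}

/-- If `I` agrees with its saturation in degrees `≥ r` and the linear form `x` is a
nonzerodivisor modulo `I^sat`, then `(I : x)` agrees with `I` in degrees `≥ r`. -/
theorem colon_agrees_with_ideal {k : Type*} [Field k] {n : ℕ} (I : Ideal (MvP k n))
    (hI : Ideal.IsHomogeneous (homogeneousSubmodule (Fin (n+1)) k) I)
    (r : ℤ) (hsat : SatInDegrees I r)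
    (x : MvP k n) (hx : x ∈ homogeneousSubmodule (Fin (n+1)) k 1)
    (hnzd : ∀ f : MvP k n, x * f ∈ satIdeal I → f ∈ satIdeal I) :
    ∀ d : ℕ, r ≤ (d : ℤ) → ∀ f ∈ homogeneousSubmodule (Fin (n+1)) k d,
      (f ∈ I.colon (Ideal.span {x}) ↔ f ∈ I) := by
  have hIsat : I ≤ satIdeal I := by
    refine le_trans ?_ (le_iSup (fun t : ℕ => I.colon ((irrIdeal k n ^ t : Ideal (MvP k n)) : Set (MvP k n))) 0)
    intro g hg
    rw [Submodule.mem_colon]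
    intro p _
    simpa [smul_eq_mul] using I.mul_mem_right p hg
  intro d hd f hf
  constructor
  · intro h
    have hxf : x * f ∈ I := by
      have := Ideal.mem_colon_span_singleton.mp h
      rwa [mul_comm]
    exact (hsat d hd f hf).mpr (hnzd f (hIsat hxf))
  · intro h
    exact Ideal.mem_colon_span_singleton.mpr (Ideal.mul_mem_right _ _ h)
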